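/- Let F be a linear ordered field equipped with its order topology, X a completely F-regular space, and A(X,F) an intermediate ring. If I is a proper ideal of A(X,F) every nonzero element of which is a divisor of zero in A(X,F), then there exists a proper z°-ideal of A(X,F) containing I. -/

import Mathlib

open Set

/-- `Pz a` : the intersection of all minimal prime ideals of `R` which contain `a`. -/
def Pz {R : Type*} [CommRing R] (a : R) : Set R :=
  ⋂ P ∈ {P : Ideal R | P ∈ minimalPrimes R ∧ a ∈ P}, (P : Set R)

/-- A proper ideal `I` is a `z°`-ideal if `Pz a ⊆ I` for every `a ∈ I`. -/
def IsZoIdeal {R : Type*} [CommRing R] (I : Ideal R) : Prop :=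
  I ≠ ⊤ ∧ ∀ a ∈ I, Pz a ⊆ (I : Set R)

/-- The zero set `Z(f)` of a continuous function `f`. -/
def ZSet {X F : Type*} [TopologicalSpace X] [TopologicalSpace F] [Zero F]
    (f : C(X, F)) : Set X := {x | f x = 0}

/-- `f` is bounded over `X` (i.e. `f ∈ B(X,F)`). -/
def BddF {X F : Type*} [TopologicalSpace X] [Field F] [LinearOrder F] [IsStrictOrderedRing F] [TopologicalSpace F]
    (f : C(X, F)) : Prop := ∃ l : F, 0 < l ∧ ∀ x, |f x| ≤ l

/-- `X` is completely `F`-regular: Hausdorff, and points can be separated from closed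
sets by bounded `F`-valued continuous functions. -/
def CompletelyFRegular (X F : Type*) [TopologicalSpace X] [Field F] [LinearOrder F] [IsStrictOrderedRing F]
    [TopologicalSpace F] : Prop :=
  T2Space X ∧ ∀ K : Set X, IsClosed K → ∀ x ∉ K, ∃ f : C(X, F),
    BddF f ∧ f x = 0 ∧ ∀ k ∈ K, f k = 1

/-- `A` is an intermediate ring: a subring of `C(X,F)` containing all of `B(X,F)`. -/
def IsIntermediate {X F : Type*} [TopologicalSpace X] [Field F] [LinearOrder F] [IsStrictOrderedRing F]
    [TopologicalSpace F] [OrderTopology F] (A : Subring C(X, F)) : Prop :=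
  ∀ f : C(X, F), BddF f → f ∈ A

/-- An ideal of closed sets in `X`: a nonempty family of closed sets, closed under
finite unions and under passing to closed subsets. -/
def IsIdealOfClosedSets {X : Type*} [TopologicalSpace X] (P : Set (Set X)) : Prop :=
  P.Nonempty ∧ (∀ A ∈ P, IsClosed A) ∧ (∀ A ∈ P, ∀ B ∈ P, A ∪ B ∈ P) ∧
    ∀ C : Set X, IsClosed C → ∀ A ∈ P, C ⊆ A → C ∈ P

/-- `X` is an almost `P_F`-space: every nonempty zero set has nonempty interior. -/
def AlmostPF (X F : Type*) [TopologicalSpace X] [Field F] [LinearOrder F] [IsStrictOrderedRing F]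
    [TopologicalSpace F] : Prop :=
  ∀ f : C(X, F), (ZSet f).Nonempty → (interior (ZSet f)).Nonempty


section Aux

variable {X F : Type*} [TopologicalSpace X] [Field F] [LinearOrder F] [IsStrictOrderedRing F]
    [TopologicalSpace F] [OrderTopology F]

/-- Evaluation at a point as a ring hom `C(X,F) →+* F`. -/
def evalHom (x : X) : C(X, F) →+* F where
  toFun f := f x
  map_one' := rfl
  map_mul' _ _ := rfl
  map_zero' := rfl
  map_add' _ _ := rfl

end Aux

set_option maxHeartbeats 1000000 in
set_option synthInstance.maxHeartbeats 400000 in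
/-- A proper ideal of A(X,F) all of whose nonzero elements are zero divisors extends
to a proper z°-ideal. -/
theorem stmt4 {X F : Type*} [TopologicalSpace X] [Field F] [LinearOrder F] [IsStrictOrderedRing F]
    [TopologicalSpace F] [OrderTopology F]
    (hX : CompletelyFRegular X F)
    (A : Subring C(X, F)) (hA : IsIntermediate A)
    (I : Ideal A) (hI : I ≠ ⊤)
    (hdiv : ∀ f ∈ I, f ≠ 0 → ∃ g : A, g ≠ 0 ∧ f * g = 0) :
    ∃ J : Ideal A, IsZoIdeal J ∧ I ≤ J := by
  classical
  by_cases hXne : Nonempty X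
  swap
  · exfalso
    apply hI
    rw [Ideal.eq_top_iff_one]
    have h10 : (1 : A) = 0 := by
      apply Subtype.ext
      apply ContinuousMap.ext
      intro x
      exact (hXne ⟨x⟩).elim
    rw [h10]
    exact I.zero_mem
  -- every element of I has a zero set with nonempty interior
  have hne0 : ∀ g : A, g ≠ 0 → ∃ x, (g : C(X, F)) x ≠ 0 := by
    intro g hg
    by_contra h
    push_neg at h
    exact hg (Subtype.ext (ContinuousMap.ext fun x => h x))
  have hint : ∀ f : A, f ∈ I → (interior (ZSet (f : C(X, F)))).Nonempty := by
    intro f hf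
    by_cases hf0 : f = 0
    · subst hf0
      refine ⟨Classical.arbitrary X, ?_⟩
      have : ZSet ((0 : A) : C(X, F)) = Set.univ := by
        ext x; simp [ZSet]
      rw [this, interior_univ]
      trivial
    · obtain ⟨g, hg0, hfg⟩ := hdiv f hf hf0
      obtain ⟨x, hx⟩ := hne0 g hg0
      have hopen : IsOpen {y | (g : C(X, F)) y ≠ 0} := by
        have := (g : C(X, F)).continuous
        exact isOpen_compl_iff.mpr (isClosed_singleton.preimage this)
      have hsub : {y | (g : C(X, F)) y ≠ 0} ⊆ ZSet (f : C(X, F)) := by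
        intro y hy
        have := congrArg (fun h : A => (h : C(X, F)) y) hfg
        simp only [Subring.coe_mul, ContinuousMap.mul_apply] at this
        have : (f : C(X, F)) y * (g : C(X, F)) y = 0 := this
        rcases mul_eq_zero.mp this with h | h
        · exact h
        · exact absurd h hy
      exact ⟨x, interior_maximal hsub hopen hx⟩
  -- the candidate ideal J
  set JC : Set A :=
    {g | ∃ f ∈ I, interior (ZSet (f : C(X, F))) ⊆ interior (ZSet (g : C(X, F)))} with hJC
  have hzsub : ∀ (u v : A), ZSet (u : C(X, F)) ⊆ ZSet ((u * v : A) : C(X, F)) := by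
    intro u v y hy
    have hy' : (u : C(X, F)) y = 0 := hy
    show ((u * v : A) : C(X, F)) y = 0
    simp [Subring.coe_mul, hy']
  let J : Ideal A :=
    { carrier := JC
      zero_mem' := ⟨0, I.zero_mem, le_refl _⟩
      add_mem' := by
        rintro g₁ g₂ ⟨f₁, hf₁, hs₁⟩ ⟨f₂, hf₂, hs₂⟩
        refine ⟨f₁ * f₁ + f₂ * f₂, I.add_mem (I.mul_mem_left _ hf₁) (I.mul_mem_left _ hf₂), ?_⟩
        have hz : ZSet ((f₁ * f₁ + f₂ * f₂ : A) : C(X, F)) =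
            ZSet (f₁ : C(X, F)) ∩ ZSet (f₂ : C(X, F)) := by
          ext y
          simp only [ZSet, Set.mem_setOf_eq, Set.mem_inter_iff, Subring.coe_add,
            Subring.coe_mul, ContinuousMap.add_apply, ContinuousMap.mul_apply]
          constructor
          · intro h
            have h1 := (add_eq_zero_iff_of_nonneg (mul_self_nonneg _) (mul_self_nonneg _)).mp h
            exact ⟨mul_self_eq_zero.mp h1.1, mul_self_eq_zero.mp h1.2⟩
          · rintro ⟨h1, h2⟩; rw [h1, h2]; ring
        rw [hz, interior_inter]
        intro y hy
        have h1 : y ∈ ZSet (g₁ : C(X, F)) := interior_subset (hs₁ hy.1)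
        have h2 : y ∈ ZSet (g₂ : C(X, F)) := interior_subset (hs₂ hy.2)
        have hopen : IsOpen (interior (ZSet (g₁ : C(X, F))) ∩ interior (ZSet (g₂ : C(X, F)))) :=
          isOpen_interior.inter isOpen_interior
        have hsub : interior (ZSet (g₁ : C(X, F))) ∩ interior (ZSet (g₂ : C(X, F))) ⊆
            ZSet ((g₁ + g₂ : A) : C(X, F)) := by
          intro z hz'
          have e1 : z ∈ ZSet (g₁ : C(X, F)) := interior_subset hz'.1
          have e2 : z ∈ ZSet (g₂ : C(X, F)) := interior_subset hz'.2
          have e1 : (g₁ : C(X, F)) z = 0 := e1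
          have e2 : (g₂ : C(X, F)) z = 0 := e2
          show ((g₁ + g₂ : A) : C(X, F)) z = 0
          simp [Subring.coe_add, e1, e2]
        exact interior_maximal hsub hopen ⟨hs₁ hy.1, hs₂ hy.2⟩
      smul_mem' := by
        rintro c g ⟨f, hf, hs⟩
        refine ⟨f, hf, hs.trans (interior_mono ?_)⟩
        have := hzsub g c
        intro y hy
        have : ((g * c : A) : C(X, F)) y = 0 := hzsub g c hy
        show ((c • g : A) : C(X, F)) y = 0
        rw [smul_eq_mul, mul_comm]
        exact this }
  have hJmem : ∀ g : A, g ∈ J ↔ g ∈ JC := fun g => Iff.rfl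
  refine ⟨J, ⟨?_, ?_⟩, ?_⟩
  · -- J ≠ ⊤
    intro htop
    have h1 : (1 : A) ∈ J := htop ▸ Submodule.mem_top
    obtain ⟨f, hf, hs⟩ := (hJmem 1).mp h1
    have hZ1 : ZSet ((1 : A) : C(X, F)) = ∅ := by
      ext y; simp [ZSet]
    obtain ⟨x, hx⟩ := hint f hf
    have := hs hx
    rw [hZ1] at this
    simp at this
  · -- z° condition
    intro a ha b hb
    obtain ⟨f, hf, hs⟩ := (hJmem a).mp ha
    refine (hJmem b).mpr ⟨f, hf, hs.trans ?_⟩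
    -- claim : interior (ZSet a) ⊆ interior (ZSet b)
    by_contra hcon
    have hnotsub : ¬ interior (ZSet (a : C(X, F))) ⊆ ZSet (b : C(X, F)) := by
      intro h
      exact hcon (interior_maximal h isOpen_interior)
    obtain ⟨x, hxa, hxb⟩ := Set.not_subset.mp hnotsub
    -- M_x : kernel of evaluation at x
    have hbx : (b : C(X, F)) x ≠ 0 := hxb
    set ev : A →+* F := (evalHom x).comp A.subtype with hev
    haveI : (RingHom.ker ev).IsPrime := RingHom.ker_isPrime ev
    obtain ⟨p, hp, hple⟩ := Ideal.exists_minimalPrimes_le (bot_le : ⊥ ≤ RingHom.ker ev)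
    have hpmin : p ∈ minimalPrimes A := hp
    -- a ∈ p
    have hap : a ∈ p := by
      obtain ⟨k, hkb, hkx, hk1⟩ := hX.2 (interior (ZSet (a : C(X, F))))ᶜ
        isOpen_interior.isClosed_compl x (by simpa using hxa)
      set kA : A := ⟨k, hA k hkb⟩ with hkA
      have hmul : a * (1 - kA) = 0 := by
        apply Subtype.ext
        apply ContinuousMap.ext
        intro y
        show (a : C(X, F)) y * ((1 : C(X, F)) y - k y) = 0
        by_cases hy : y ∈ interior (ZSet (a : C(X, F)))
        · have h0 : y ∈ ZSet (a : C(X, F)) := interior_subset hy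
          have h0 : (a : C(X, F)) y = 0 := h0
          rw [h0, zero_mul]
        · have : k y = 1 := hk1 y hy
          simp [this]
      haveI : p.IsPrime := hpmin.1.1
      have h0p : a * (1 - kA) ∈ p := by rw [hmul]; exact p.zero_mem
      rcases (‹p.IsPrime›).mem_or_mem h0p with h | h
      · exact h
      · exfalso
        have : ev (1 - kA) = 0 := hple h
        have : (1 : F) - k x = 0 := by exact this
        rw [hkx, sub_zero] at this
        exact one_ne_zero this
    -- b ∈ p from hb : b ∈ Pz a, but b ∉ ker ev ⊇ p
    have hbp : b ∈ p := by
      have := hb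
      rw [Pz] at this
      exact Set.mem_iInter₂.mp this p ⟨hpmin, hap⟩
    have : ev b = 0 := hple hbp
    exact hbx (by exact this)
  · -- I ≤ J
    intro f hf
    exact (hJmem f).mpr ⟨f, hf, le_refl _⟩
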